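/- Let k be a commutative ring with unit, A an associative unital k-algebra, M an A-bimodule on which k acts symmetrically, f a 2-cocycle on A with coefficients in M, and B the extension algebra defined by f. Then B is uniquely clean if and only if A is uniquely clean and every idempotent of A commutes with all elements of M (i.e. e·x = x·e for every idempotent e ∈ A and every x ∈ M). -/

import Mathlib

/-- A ring is uniquely clean if every element is the sum of an idempotent and a
unit in exactly one way. -/
def IsUniquelyCleanRing (R : Type*) [Ring R] : Prop :=
  ∀ a : R, ∃! p : R × R, IsIdempotentElem p.1 ∧ IsUnit p.2 ∧ a = p.1 + p.2

private lemma uc_aux_key {R : Type*} [Ring R] (h : IsUniquelyCleanRing R)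
    {e t : R} (he : e * e = e) (ht2 : t * t = 0) (hsum : e * t + t * e = t) :
    t = 0 := by
  have hg : IsIdempotentElem (e + t) := by
    show (e + t) * (e + t) = e + t
    rw [mul_add, add_mul, add_mul, he, ht2, add_zero, add_assoc,
      add_comm (t * e) (e * t), hsum]
  have hu1 : (t - 1) * (-(1 + t)) = 1 := by
    rw [mul_neg, mul_add, sub_mul, sub_mul, ht2]; simp
  have hu2 : (-(1 + t)) * (t - 1) = 1 := by
    rw [neg_mul, add_mul, mul_sub, mul_sub, ht2]; simp
  have hu : IsUnit (t - 1) := ⟨⟨t - 1, -(1 + t), hu1, hu2⟩, rfl⟩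
  have h1 : ((e + t, (-1 : R)) : R × R) = ((e, t - 1) : R × R) :=
    (h (e + t - 1)).unique ⟨hg, isUnit_one.neg, by show e + t - 1 = e + t + -1; rw [sub_eq_add_neg]⟩ ⟨he, hu, by abel⟩
  have h2 : e + t = e := congrArg Prod.fst h1
  exact add_eq_left.mp h2

private lemma uc_idem_central {R : Type*} [Ring R] (h : IsUniquelyCleanRing R)
    {e : R} (he : IsIdempotentElem e) (r : R) : e * r = r * e := by
  have he' : e * e = e := he
  have h0 : (1 - e) * e = 0 := by rw [sub_mul, one_mul, he', sub_self]
  have h0' : e * (1 - e) = 0 := by rw [mul_sub, mul_one, he', sub_self]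
  have ht : e * (r * (1 - e)) = 0 := by
    apply uc_aux_key h he'
    · rw [mul_assoc, mul_assoc r (1 - e), ← mul_assoc (1 - e) e, h0, zero_mul,
        mul_zero, mul_zero]
    · rw [← mul_assoc e e, he', mul_assoc e (r * (1 - e)) e,
        mul_assoc r (1 - e) e, h0, mul_zero, mul_zero, add_zero]
  have hs : (1 - e) * (r * e) = 0 := by
    apply uc_aux_key h he'
    · rw [mul_assoc (1 - e) (r * e) ((1 - e) * (r * e)), mul_assoc r e,
        ← mul_assoc e (1 - e), h0', zero_mul, mul_zero, mul_zero]
    · rw [← mul_assoc e (1 - e), h0', zero_mul, mul_assoc (1 - e) (r * e) e,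
        mul_assoc r e e, he', zero_add]
  rw [mul_sub, mul_sub, mul_one] at ht
  rw [sub_mul, one_mul] at hs
  rw [sub_eq_zero] at ht hs
  exact ht.trans hs.symm

/-- With `A`, `M`, a 2-cocycle `f` and the extension algebra `B` as in the
paper, `B` is uniquely clean if and only if `A` is uniquely clean and every
idempotent of `A` commutes with all elements of `M`. -/
theorem uniquelyClean_of_cocycle_extension
    {k A M B : Type*} [CommRing k] [Ring A] [Algebra k A]
    [AddCommGroup M] [Module A M] [Module Aᵐᵒᵖ M] [SMulCommClass A Aᵐᵒᵖ M]
    [Module k M] [IsScalarTower k A M]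
    (hsymm : ∀ (c : k) (m : M),
      algebraMap k A c • m = MulOpposite.op (algebraMap k A c) • m)
    (f : A →ₗ[k] A →ₗ[k] M)
    (hcocycle : ∀ a b c : A,
      a • f b c - f (a * b) c + f a (b * c) - MulOpposite.op c • f a b = 0)
    [Ring B] (ι : A × M ≃ B)
    (hadd : ∀ p q : A × M, ι (p.1 + q.1, p.2 + q.2) = ι p + ι q)
    (hmul : ∀ p q : A × M,
      ι (p.1 * q.1, p.1 • q.2 + MulOpposite.op q.1 • p.2 + f p.1 q.1) = ι p * ι q)
    (hone : ι (1, - f 1 1) = 1) :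
    IsUniquelyCleanRing B ↔
      IsUniquelyCleanRing A ∧
        ∀ e : A, IsIdempotentElem e → ∀ x : M, e • x = MulOpposite.op e • x := by
  -- basic facts
  have hιadd : ∀ (a a' : A) (m m' : M),
      ι (a + a', m + m') = ι (a, m) + ι (a', m') := fun a a' m m' => hadd (a, m) (a', m')
  have hιmul : ∀ (a a' : A) (m m' : M),
      ι (a * a', a • m' + MulOpposite.op a' • m + f a a') = ι (a, m) * ι (a', m') :=
    fun a a' m m' => hmul (a, m) (a', m')
  have hι00 : ι (0, 0) = 0 := by
    have h := hadd (0, 0) (0, 0)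
    simp only [add_zero] at h
    exact left_eq_add.mp h
  have hneg : ∀ (a : A) (m : M), ι (-a, -m) = - ι (a, m) := by
    intro a m
    have h := hιadd a (-a) m (-m)
    rw [add_neg_cancel, add_neg_cancel, hι00] at h
    exact (neg_eq_of_add_eq_zero_right h.symm).symm
  have hιsub : ∀ (a a' : A) (m m' : M),
      ι (a - a', m - m') = ι (a, m) - ι (a', m') := by
    intro a a' m m'
    rw [sub_eq_add_neg, sub_eq_add_neg, sub_eq_add_neg, ← hneg, ← hιadd]
  have hf0r : ∀ a : A, f a 0 = 0 := fun a => map_zero (f a)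
  have hf0l : ∀ a : A, f 0 a = 0 := fun a => by simp
  -- units of the form ι (1, n)
  have hUone : ∀ n : M, IsUnit (ι (1, n)) := by
    intro n
    refine ⟨⟨ι (1, n), ι (1, -n - f 1 1 - f 1 1), ?_, ?_⟩, rfl⟩
    · rw [← hιmul, ← hone]
      refine congrArg ι (Prod.ext (one_mul 1) ?_)
      show (1 : A) • (-n - f 1 1 - f 1 1) + MulOpposite.op (1 : A) • n + f 1 1 = - f 1 1
      rw [one_smul, MulOpposite.op_one, one_smul]
      abel
    · rw [← hιmul, ← hone]
      refine congrArg ι (Prod.ext (one_mul 1) ?_)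
      show (1 : A) • n + MulOpposite.op (1 : A) • (-n - f 1 1 - f 1 1) + f 1 1 = - f 1 1
      rw [one_smul, MulOpposite.op_one, one_smul]
      abel
  -- unit lifting: if a is a unit then ι (a, m) is a unit
  have hUlift : ∀ (a : A) (m : M), IsUnit a → IsUnit (ι (a, m)) := by
    intro a m ha
    obtain ⟨u, rfl⟩ := ha
    have hr : ι ((u : A), m) * ι ((↑u⁻¹ : A), 0) =
        ι (1, MulOpposite.op (↑u⁻¹ : A) • m + f (↑u : A) (↑u⁻¹ : A)) := by
      rw [← hιmul]
      refine congrArg ι (Prod.ext (u.mul_inv) ?_)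
      show (↑u : A) • (0 : M) + MulOpposite.op (↑u⁻¹ : A) • m + f (↑u : A) (↑u⁻¹ : A) = _
      rw [smul_zero, zero_add]
    have hl : ι ((↑u⁻¹ : A), 0) * ι ((u : A), m) =
        ι (1, (↑u⁻¹ : A) • m + f (↑u⁻¹ : A) (↑u : A)) := by
      rw [← hιmul]
      refine congrArg ι (Prod.ext (u.inv_mul) ?_)
      show (↑u⁻¹ : A) • m + MulOpposite.op (↑u : A) • (0 : M) + f (↑u⁻¹ : A) (↑u : A) = _
      rw [smul_zero, add_zero]
    obtain ⟨w, hw⟩ := hUone (MulOpposite.op (↑u⁻¹ : A) • m + f (↑u : A) (↑u⁻¹ : A))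
    obtain ⟨w', hw'⟩ := hUone ((↑u⁻¹ : A) • m + f (↑u⁻¹ : A) (↑u : A))
    set b := ι ((u : A), m)
    set c := ι ((↑u⁻¹ : A), 0)
    have hbr : b * (c * ↑w⁻¹) = 1 := by
      rw [← mul_assoc, hr, ← hw, Units.mul_inv]
    have hlb : (↑w'⁻¹ * c) * b = 1 := by
      rw [mul_assoc, hl, ← hw', Units.inv_mul]
    have heq : (↑w'⁻¹ * c : B) = c * ↑w⁻¹ := by
      calc (↑w'⁻¹ * c : B) = (↑w'⁻¹ * c) * (b * (c * ↑w⁻¹)) := by rw [hbr, mul_one]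
        _ = ((↑w'⁻¹ * c) * b) * (c * ↑w⁻¹) := (mul_assoc (↑w'⁻¹ * c) b (c * ↑w⁻¹)).symm
        _ = c * ↑w⁻¹ := by rw [hlb, one_mul]
    exact ⟨⟨b, c * ↑w⁻¹, hbr, by rw [← heq]; exact hlb⟩, rfl⟩
  -- ι.symm facts
  have hπmul : ∀ p q : A × M, ι.symm (ι p * ι q) =
      (p.1 * q.1, p.1 • q.2 + MulOpposite.op q.1 • p.2 + f p.1 q.1) := by
    intro p q
    rw [← hmul, Equiv.symm_apply_apply]
  have hπone : ι.symm (1 : B) = ((1 : A), - f 1 1) := by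
    rw [← hone, Equiv.symm_apply_apply]
  -- unit projection
  have hUproj : ∀ p : A × M, IsUnit (ι p) → IsUnit p.1 := by
    intro p hp
    obtain ⟨w, hw⟩ := hp
    set q := ι.symm (↑w⁻¹ : B) with hq
    have hq' : ι q = (↑w⁻¹ : B) := ι.apply_symm_apply _
    have h1 : ι p * ι q = 1 := by rw [hq', ← hw, Units.mul_inv]
    have h2 : ι q * ι p = 1 := by rw [hq', ← hw, Units.inv_mul]
    have h1' : p.1 * q.1 = 1 := by
      have := congrArg Prod.fst ((hπmul p q).symm.trans (by rw [h1, hπone]))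
      exact this
    have h2' : q.1 * p.1 = 1 := by
      have := congrArg Prod.fst ((hπmul q p).symm.trans (by rw [h2, hπone]))
      exact this
    exact ⟨⟨p.1, q.1, h1', h2'⟩, rfl⟩
  -- idempotent characterisation
  have hIdem_iff : ∀ p : A × M, IsIdempotentElem (ι p) ↔
      (p.1 * p.1 = p.1 ∧
        p.1 • p.2 + MulOpposite.op p.1 • p.2 + f p.1 p.1 = p.2) := by
    intro p
    constructor
    · intro h
      have h1 := hmul p p
      rw [show ι p * ι p = ι p from h] at h1
      have h2 := ι.injective h1
      exact ⟨congrArg Prod.fst h2, congrArg Prod.snd h2⟩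
    · rintro ⟨h1, h2⟩
      show ι p * ι p = ι p
      rw [← hmul]
      exact congrArg ι (Prod.ext h1 h2)
  -- cocycle at an idempotent
  have hfe : ∀ e : A, e * e = e →
      e • f e e = MulOpposite.op e • f e e := by
    intro e he
    have h := hcocycle e e e
    rw [he] at h
    have h2 : e • f e e - MulOpposite.op e • f e e = 0 := by rw [← h]; abel
    exact sub_eq_zero.mp h2
  -- idempotent lifting
  have hlift : ∀ e : A, e * e = e → IsIdempotentElem (ι (e, f e e - e • f e e - e • f e e)) := by
    intro e he
    refine (hIdem_iff (e, f e e - e • f e e - e • f e e)).mpr ⟨he, ?_⟩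
    show e • (f e e - e • f e e - e • f e e) +
        MulOpposite.op e • (f e e - e • f e e - e • f e e) + f e e =
        f e e - e • f e e - e • f e e
    have h1 : e • (e • f e e) = e • f e e := by rw [smul_smul, he]
    have h2 : MulOpposite.op e • (e • f e e) = e • f e e := by
      rw [← smul_comm, ← hfe e he, h1]
    rw [smul_sub, smul_sub, smul_sub, smul_sub, h1, h2, ← hfe e he]
    abel
  -- multiplication against M-elements
  have hmulM : ∀ (a : A) (m x : M), ι (a, m) * ι (0, x) = ι (0, a • x) := by
    intro a m x
    rw [← hιmul]
    refine congrArg ι (Prod.ext (mul_zero a) ?_)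
    show a • x + MulOpposite.op (0 : A) • m + f a 0 = a • x
    rw [MulOpposite.op_zero, zero_smul, hf0r, add_zero, add_zero]
  have hMmul : ∀ (a : A) (m x : M),
      ι (0, x) * ι (a, m) = ι (0, MulOpposite.op a • x) := by
    intro a m x
    rw [← hιmul]
    refine congrArg ι (Prod.ext (zero_mul a) ?_)
    show (0 : A) • m + MulOpposite.op a • x + f 0 a = MulOpposite.op a • x
    rw [zero_smul, hf0l, zero_add, add_zero]
  constructor
  · intro hB
    constructor
    · -- A is uniquely clean
      intro a
      obtain ⟨⟨E, U⟩, ⟨hEi, hUu, hsumB⟩, huniq⟩ := hB (ι (a, 0))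
      obtain ⟨p, rfl⟩ := ι.surjective E
      obtain ⟨q, rfl⟩ := ι.surjective U
      refine ⟨(p.1, q.1), ⟨((hIdem_iff p).mp hEi).1, hUproj q hUu, ?_⟩, ?_⟩
      · have h := hsumB
        rw [← hadd p q] at h
        exact congrArg Prod.fst (ι.injective h)
      · rintro ⟨e', u'⟩ ⟨hi', hu', hsum'⟩
        have hi'' : e' * e' = e' := hi'
        obtain ⟨w, hE'⟩ : ∃ w : M, IsIdempotentElem (ι (e', w)) := ⟨_, hlift e' hi''⟩
        have hU' : IsUnit (ι (a - e', -w)) := by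
          apply hUlift
          rw [hsum', add_sub_cancel_left]
          exact hu'
        have c1 : e' + (a - e') = a := by abel
        have c2 : w + -w = (0 : M) := by abel
        have hsB : ι ((a : A), (0 : M)) = ι (e', w) + ι (a - e', -w) := by
          rw [← hιadd, c1, c2]
        have h := huniq (ι (e', w), ι (a - e', -w)) ⟨hE', hU', hsB⟩
        have hE := congrArg Prod.fst h
        have hU := congrArg Prod.snd h
        simp only at hE hU
        have hE2 : ((e' : A), w) = p := ι.injective hE
        have hU2 : ((a - e' : A), -w) = q := ι.injective hU
        refine Prod.ext ?_ ?_
        · show e' = p.1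
          exact congrArg Prod.fst hE2
        · show u' = q.1
          rw [← congrArg Prod.fst hU2]
          show u' = a - e'
          rw [hsum', add_sub_cancel_left]
    · -- idempotents commute with M
      intro e he x
      have he' : e * e = e := he
      have hE := hlift e he'
      have hc := uc_idem_central hB hE (ι (0, x))
      rw [hmulM, hMmul] at hc
      exact congrArg Prod.snd (ι.injective hc)
  · rintro ⟨hA, hcomm⟩ b
    obtain ⟨⟨a, m⟩, rfl⟩ := ι.surjective b
    obtain ⟨⟨e, u⟩, ⟨hei, huu, hsum⟩, huniq⟩ := hA a
    have hei' : e * e = e := hei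
    obtain ⟨w, hEw⟩ : ∃ w : M, IsIdempotentElem (ι (e, w)) := ⟨_, hlift e hei'⟩
    have hweq : e • w + MulOpposite.op e • w + f e e = w :=
      ((hIdem_iff (e, w)).mp hEw).2
    have hsumEx : ι (a, m) = ι (e, w) + (ι (a, m) - ι (e, w)) := by abel
    refine ⟨(ι (e, w), ι (a, m) - ι (e, w)), ⟨hEw, ?_, hsumEx⟩, ?_⟩
    · rw [← hιsub]
      apply hUlift
      rw [hsum, add_sub_cancel_left]
      exact huu
    · rintro ⟨E', U'⟩ ⟨hE', hU', hsum'⟩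
      obtain ⟨p, rfl⟩ := ι.surjective E'
      obtain ⟨q, rfl⟩ := ι.surjective U'
      have hAdec : ((p.1, q.1) : A × A) = (e, u) := by
        apply huniq
        refine ⟨((hIdem_iff p).mp hE').1, hUproj q hU', ?_⟩
        have h := hsum'
        rw [← hadd p q] at h
        exact congrArg Prod.fst (ι.injective h)
      have hp1 : p.1 = e := congrArg Prod.fst hAdec
      have hxeq : e • p.2 + MulOpposite.op e • p.2 + f e e = p.2 := by
        have h := ((hIdem_iff p).mp hE').2
        rw [hp1] at h
        exact h
      -- d := p.2 - w satisfies e•d + op e•d = d, hence d = 0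
      have hd : e • (p.2 - w) + MulOpposite.op e • (p.2 - w) = p.2 - w := by
        rw [smul_sub, smul_sub]
        conv_rhs => rw [← hxeq, ← hweq]
        abel
      have hd2 : e • (p.2 - w) + e • (p.2 - w) = p.2 - w := by
        rw [← hcomm e hei (p.2 - w)] at hd
        exact hd
      have hd3 : e • (p.2 - w) = 0 := by
        have h := congrArg (fun y => e • y) hd2
        simp only [smul_add, smul_smul, hei'] at h
        exact add_eq_left.mp h
      have hd0 : p.2 - w = 0 := by rw [← hd2, hd3, add_zero]
      have hp2 : p.2 = w := sub_eq_zero.mp hd0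
      have hpE : p = (e, w) := Prod.ext hp1 hp2
      refine Prod.ext ?_ ?_
      · exact congrArg ι hpE
      · show ι q = ι (a, m) - ι (e, w)
        rw [hsum', hpE]
        abel
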